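/- arXiv:1902.05086 — 4 statements merged into one kernel-verified Lean document; each statement's English description precedes it below -/
import Mathlib

section
/- Let A ∈ 𝕂^{N×N}, B ∈ 𝕂^{N×m}, and D > 0. Then the pair (A, e^{−DA} B) satisfies the Kalman rank condition if and only if the pair (A, B) satisfies the Kalman rank condition. -/
open Matrix

/-- The controllability (Kalman) matrix `[B, AB, …, A^{N−1}B]` of a pair `(A, B)`,
as a matrix indexed by `Fin N × Fin m` columns. -/
def ctrbMatrix {𝕂 : Type*} [RCLike 𝕂] {N m : ℕ}
    (A : Matrix (Fin N) (Fin N) 𝕂) (B : Matrix (Fin N) (Fin m) 𝕂) :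
    Matrix (Fin N) (Fin N × Fin m) 𝕂 :=
  Matrix.of fun i jk => ((A ^ (jk.1 : ℕ)) * B) i jk.2

lemma ctrb_mul_comm {𝕂 : Type*} [RCLike 𝕂] {N m : ℕ}
    (A E : Matrix (Fin N) (Fin N) 𝕂) (B : Matrix (Fin N) (Fin m) 𝕂)
    (h : Commute E A) :
    ctrbMatrix A (E * B) = E * ctrbMatrix A B := by
  ext i ⟨k, j⟩
  have hc : A ^ (k : ℕ) * E = E * A ^ (k : ℕ) := ((h.symm.pow_left _)).eq
  simp only [ctrbMatrix, Matrix.of_apply, Matrix.mul_apply]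
  have : (A ^ (k : ℕ) * (E * B)) i j = ((E * (A ^ (k : ℕ) * B))) i j := by
    rw [← Matrix.mul_assoc, hc, Matrix.mul_assoc]
  simpa [Matrix.mul_apply, ctrbMatrix] using this

/-- `(A, e^{−DA} B)` satisfies the Kalman rank condition iff `(A, B)` does. -/
theorem stmt_3 {𝕂 : Type*} [RCLike 𝕂] (N m : ℕ)
    (A : Matrix (Fin N) (Fin N) 𝕂) (B : Matrix (Fin N) (Fin m) 𝕂)
    (D : ℝ) (hD : 0 < D) :
    (ctrbMatrix A (NormedSpace.exp ((-(D : 𝕂)) • A) * B)).rank = N ↔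
      (ctrbMatrix A B).rank = N := by
  set E := NormedSpace.exp ((-(D : 𝕂)) • A) with hE
  have hcomm : Commute E A := by
    have : Commute ((-(D : 𝕂)) • A) A := (Commute.refl A).smul_left _
    exact this.exp_left
  have hunit : IsUnit E.det :=
    (Matrix.isUnit_iff_isUnit_det _).mp (Matrix.isUnit_exp _)
  rw [ctrb_mul_comm A E B hcomm, Matrix.rank_mul_eq_right_of_isUnit_det E _ hunit]
end

section
/- Let A be diagonalizable with pairwise distinct eigenvalue-blocks: assume A ∈ 𝕂^{N₀×N₀} is diagonal with diagonal (λ_1, …, λ_{N₀}) arranged so that there are p blocks of sizes n_1, …, n_p (n_1 + … + n_p = N₀) of equal eigenvalues, with distinct eigenvalues across blocks. Let B = (b_{n,k}) ∈ 𝕂^{N₀×m}. Then (A, B) satisfies the Kalman rank condition if and only if for every block l, the submatrix of B consisting of the rows of the l-th block has rank n_l. In particular a necessary condition is n_l ≤ m for all l. -/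
open Matrix

lemma rank_eq_card_iff_li {K : Type*} [Field K] {ι κ : Type*} [Fintype ι] [Fintype κ]
    (M : Matrix ι κ K) : M.rank = Fintype.card ι ↔ LinearIndependent K (fun i => M i) := by
  rw [linearIndependent_iff_card_eq_finrank_span, Set.finrank, rank_eq_finrank_span_row, eq_comm]
  rfl

lemma stmt4_aux {𝕂 : Type*} [RCLike 𝕂] (N₀ m p : ℕ)
    (μ : Fin p → 𝕂) (hμ : Function.Injective μ)
    (c : Fin N₀ → Fin p) (hc : Function.Surjective c)
    (B : Matrix (Fin N₀) (Fin m) 𝕂)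
    (K : Matrix (Fin N₀) (Fin N₀ × Fin m) 𝕂)
    (hK : ∀ (i : Fin N₀) (jk : Fin N₀ × Fin m), K i jk = μ (c i) ^ (jk.1 : ℕ) * B i jk.2) :
    (K.rank = N₀ ↔
      ∀ l : Fin p,
        (Matrix.of fun (i : {i : Fin N₀ // c i = l}) (k : Fin m) => B i.1 k).rank
          = Fintype.card {i : Fin N₀ // c i = l}) := by
  classical
  have hpN : p ≤ N₀ := by simpa using Fintype.card_le_of_surjective c hc
  have hmain := rank_eq_card_iff_li K
  rw [Fintype.card_fin] at hmain
  rw [hmain]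
  constructor
  · intro h l
    rw [rank_eq_card_iff_li]
    rw [Fintype.linearIndependent_iff] at h ⊢
    intro u hu
    have hu' : ∀ k, ∑ i : {i : Fin N₀ // c i = l}, u i * B i.1 k = 0 := by
      intro k
      have := congrFun hu k
      simpa [Finset.sum_apply] using this
    set v : Fin N₀ → 𝕂 := fun i => if h : c i = l then u ⟨i, h⟩ else 0 with hv
    have hv0 : ∀ i, v i = 0 := by
      apply h
      funext jk
      simp only [Finset.sum_apply, Pi.smul_apply, smul_eq_mul, Pi.zero_apply]
      rw [← Fintype.sum_fiberwise c (fun i => v i * K i jk)]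
      apply Finset.sum_eq_zero
      intro l' _
      by_cases hl : l' = l
      · subst hl
        have h2 : ∀ i : {i : Fin N₀ // c i = l'},
            v i.1 * K i.1 jk = μ l' ^ (jk.1 : ℕ) * (u i * B i.1 jk.2) := by
          rintro ⟨i, hi⟩
          rw [hK]
          simp only [hv, dif_pos hi, hi]
          ring
        rw [Finset.sum_congr rfl (fun i _ => h2 i), ← Finset.mul_sum, hu' jk.2, mul_zero]
      · apply Finset.sum_eq_zero
        intro i _
        have : v i.1 = 0 := dif_neg (by rw [i.2]; exact hl)
        rw [this, zero_mul]
    intro i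
    have := hv0 i.1
    rw [hv] at this
    simpa [dif_pos i.2] using this
  · intro h
    rw [Fintype.linearIndependent_iff]
    intro v hv
    set w : Fin p → Fin m → 𝕂 := fun l k => ∑ i : {i : Fin N₀ // c i = l}, v i.1 * B i.1 k with hw
    have hvjk : ∀ (j : Fin N₀) (k : Fin m), ∑ l', μ l' ^ (j : ℕ) * w l' k = 0 := by
      intro j k
      have hz := congrFun hv (j, k)
      simp only [Finset.sum_apply, Pi.smul_apply, smul_eq_mul, Pi.zero_apply] at hz
      rw [← Fintype.sum_fiberwise c (fun i => v i * K i (j, k))] at hz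
      rw [← hz]
      apply Finset.sum_congr rfl
      intro l' _
      rw [hw, Finset.mul_sum]
      apply Finset.sum_congr rfl
      intro i _
      rw [hK, i.2]
      ring
    have hdet : IsUnit (vandermonde μ)ᵀ.det := by
      rw [det_transpose, det_vandermonde]
      apply IsUnit.mk0
      apply Finset.prod_ne_zero_iff.mpr
      intro i _
      apply Finset.prod_ne_zero_iff.mpr
      intro j hj
      exact sub_ne_zero.mpr fun e => (Finset.mem_Ioi.mp hj).ne' (hμ e)
    have hinj := Matrix.mulVec_injective_iff_isUnit.mpr ((Matrix.isUnit_iff_isUnit_det _).mpr hdet)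
    have hw0 : ∀ l' k, w l' k = 0 := by
      intro l' k
      have hmv : (vandermonde μ)ᵀ.mulVec (fun l => w l k) = 0 := by
        funext j
        have := hvjk (Fin.castLE hpN j) k
        simpa [mulVec, dotProduct, vandermonde] using this
      have hz0 : (fun l => w l k) = 0 := hinj (by rw [hmv, Matrix.mulVec_zero])
      exact congrFun hz0 l'
    intro i
    have hl := h (c i)
    rw [rank_eq_card_iff_li, Fintype.linearIndependent_iff] at hl
    refine hl (fun i' => v i'.1) ?_ ⟨i, rfl⟩
    funext k
    have := hw0 (c i) k
    rw [hw] at this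
    simpa [Finset.sum_apply] using this

/-- PBH-type criterion for a diagonal `A` whose diagonal entries come in
blocks of equal eigenvalues (block assignment `c : Fin N₀ → Fin p`, distinct eigenvalues
`μ : Fin p → 𝕂` across blocks, each block nonempty).  `(A, B)` satisfies the Kalman rank
condition iff for every block `l` the submatrix of `B` made of the rows of that block has
full row rank `n_l = card {i // c i = l}`; in particular `n_l ≤ m` is necessary. -/
theorem stmt_4 {𝕂 : Type*} [RCLike 𝕂] (N₀ m p : ℕ)
    (μ : Fin p → 𝕂) (hμ : Function.Injective μ)
    (c : Fin N₀ → Fin p) (hc : Function.Surjective c)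
    (B : Matrix (Fin N₀) (Fin m) 𝕂) :
    ((ctrbMatrix (Matrix.diagonal fun i => μ (c i)) B).rank = N₀ ↔
      ∀ l : Fin p,
        (Matrix.of fun (i : {i : Fin N₀ // c i = l}) (k : Fin m) => B i.1 k).rank
          = Fintype.card {i : Fin N₀ // c i = l}) ∧
    ((ctrbMatrix (Matrix.diagonal fun i => μ (c i)) B).rank = N₀ →
      ∀ l : Fin p, Fintype.card {i : Fin N₀ // c i = l} ≤ m) := by
  have hK : ∀ (i : Fin N₀) (jk : Fin N₀ × Fin m),
      ctrbMatrix (Matrix.diagonal fun i => μ (c i)) B i jk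
        = μ (c i) ^ (jk.1 : ℕ) * B i jk.2 := by
    intro i jk
    simp [ctrbMatrix, Matrix.diagonal_pow, Matrix.diagonal_mul]
  have main := stmt4_aux N₀ m p μ hμ c hc B _ hK
  refine ⟨main, fun hr l => ?_⟩
  have h1 := main.mp hr l
  have h2 := Matrix.rank_le_card_width
    (Matrix.of fun (i : {i : Fin N₀ // c i = l}) (k : Fin m) => B i.1 k)
  rw [h1, Fintype.card_fin] at h2
  exact h2
end

section
/- Let A ∈ 𝕂^{N₀×N₀}, B ∈ 𝕂^{N₀×m}, and suppose Y : ℝ₊ → 𝕂^{N₀} is C¹ and satisfies Y'(t) = A Y(t) + B u(t−D) + d(t) for a continuous input u : [−D, ∞) → 𝕂^m and continuous d. Define the Artstein transform Z(t) = Y(t) + ∫_{t−D}^{t} e^{(t−s−D)A} B u(s) ds. Then Z is C¹ and satisfies Z'(t) = A Z(t) + e^{−DA} B u(t) + d(t) for all t ≥ 0. -/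
open Matrix intervalIntegral

attribute [local instance] Matrix.linftyOpNormedRing Matrix.linftyOpNormedAlgebra

set_option maxHeartbeats 1000000 in
/-- the Artstein transform
`Z(t) = Y(t) + ∫_{t−D}^t e^{(t−s−D)A} B u(s) ds` converts the delayed-input ODE
`Y' = AY + Bu(·−D) + d` into the delay-free ODE `Z' = AZ + e^{−DA}Bu + d` on `ℝ₊`
(derivatives on `ℝ₊` are taken within `Set.Ici 0`). -/
theorem stmt_6 {𝕂 : Type*} [RCLike 𝕂] (N₀ m : ℕ) (D : ℝ) (hD : 0 < D)
    (A : Matrix (Fin N₀) (Fin N₀) 𝕂) (B : Matrix (Fin N₀) (Fin m) 𝕂)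
    (Y : ℝ → Fin N₀ → 𝕂) (u : ℝ → Fin m → 𝕂) (d : ℝ → Fin N₀ → 𝕂)
    (hu : ContinuousOn u (Set.Ici (-D))) (hd : ContinuousOn d (Set.Ici 0))
    (hY : ∀ t ≥ (0 : ℝ),
      HasDerivWithinAt Y (A *ᵥ Y t + B *ᵥ u (t - D) + d t) (Set.Ici 0) t) :
    ∀ t ≥ (0 : ℝ),
      HasDerivWithinAt
        (fun t => Y t
          + ∫ s in (t - D)..t, (NormedSpace.exp (((t - s - D : ℝ) : 𝕂) • A)) *ᵥ (B *ᵥ u s))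
        (A *ᵥ (Y t
            + ∫ s in (t - D)..t, (NormedSpace.exp (((t - s - D : ℝ) : 𝕂) • A)) *ᵥ (B *ᵥ u s))
          + (NormedSpace.exp ((-(D : 𝕂)) • A)) *ᵥ (B *ᵥ u t) + d t)
        (Set.Ici 0) t := by
  intro t ht
  -- conversion from 𝕂-exponential to ℝ-exponential
  have hcast : ∀ c : ℝ, NormedSpace.exp ((c : 𝕂) • A) = NormedSpace.exp (c • A) := by
    intro c
    rw [← RCLike.real_smul_eq_coe_smul (K := 𝕂)]
  set E : ℝ → Matrix (Fin N₀) (Fin N₀) 𝕂 := fun τ => NormedSpace.exp (τ • A) with hE_def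
  set g : ℝ → (Fin N₀ → 𝕂) := fun s => NormedSpace.exp ((-s - D) • A) *ᵥ (B *ᵥ u s)
    with hg_def
  have hmul : ∀ a b : ℝ, NormedSpace.exp (a • A) * NormedSpace.exp (b • A)
      = NormedSpace.exp ((a + b) • A) := by
    intro a b
    rw [add_smul]
    exact (NormedSpace.exp_add_of_commute (((Commute.refl A).smul_left a).smul_right b)).symm
  -- continuity of g
  have hmv : Continuous (fun p : Matrix (Fin N₀) (Fin N₀) 𝕂 × (Fin N₀ → 𝕂) => p.1 *ᵥ p.2) :=
    Continuous.matrix_mulVec continuous_fst continuous_snd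
  have hmvB : Continuous (fun v : Fin m → 𝕂 => B *ᵥ v) :=
    Continuous.matrix_mulVec continuous_const continuous_id
  have hexpc : Continuous (fun s : ℝ => NormedSpace.exp ((-s - D) • A)) :=
    NormedSpace.exp_continuous.comp ((continuous_neg.sub continuous_const).smul continuous_const)
  have hg_cont : ContinuousOn g (Set.Ici (-D)) :=
    hmv.comp_continuousOn (hexpc.continuousOn.prodMk (hmvB.comp_continuousOn hu))
  have hgint : ∀ a b : ℝ, -D ≤ a → -D ≤ b →
      IntervalIntegrable g MeasureTheory.volume a b := by
    intro a b ha hb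
    refine (hg_cont.mono ?_).intervalIntegrable
    intro x hx
    exact le_trans (le_inf ha hb) hx.1
  -- fundamental theorem of calculus for g
  have hG₁ : ∀ b, -D ≤ b →
      HasDerivWithinAt (fun τ => ∫ s in (-D)..τ, g s) (g b) (Set.Ici (-D)) b := by
    intro b hb
    rcases eq_or_lt_of_le hb with h | h
    · subst h
      exact intervalIntegral.integral_hasDerivWithinAt_right
        (hgint _ _ le_rfl le_rfl)
        ((hg_cont.mono Set.Ioi_subset_Ici_self).stronglyMeasurableAtFilter_nhdsWithin
          measurableSet_Ioi _)
        ((hg_cont _ Set.self_mem_Ici).mono Set.Ioi_subset_Ici_self)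
    · have hcb : ContinuousAt g b := hg_cont.continuousAt (Ici_mem_nhds h)
      exact (intervalIntegral.integral_hasDerivAt_right (hgint _ _ le_rfl hb)
        ((hg_cont.mono Set.Ioi_subset_Ici_self).stronglyMeasurableAtFilter isOpen_Ioi b h)
        hcb).hasDerivWithinAt
  -- the bundled linear map `M ↦ (v ↦ M *ᵥ v)`
  let L : Matrix (Fin N₀) (Fin N₀) 𝕂 →ₗ[ℝ] ((Fin N₀ → 𝕂) →L[ℝ] (Fin N₀ → 𝕂)) :=
    { toFun := fun M => LinearMap.toContinuousLinearMap (M.mulVecLin.restrictScalars ℝ)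
      map_add' := by
        intro M N; ext v i
        simp [Matrix.add_mulVec]
      map_smul' := by
        intro r M; ext v i
        simp [Matrix.mulVec, dotProduct, Finset.smul_sum, smul_mul_assoc] }
  let Lc : Matrix (Fin N₀) (Fin N₀) 𝕂 →L[ℝ] ((Fin N₀ → 𝕂) →L[ℝ] (Fin N₀ → 𝕂)) :=
    LinearMap.toContinuousLinearMap L
  have hLc : ∀ (M : Matrix (Fin N₀) (Fin N₀) 𝕂) (v : Fin N₀ → 𝕂), Lc M v = M *ᵥ v :=
    fun M v => rfl
  -- derivative of E
  have hE' : ∀ τ : ℝ, HasDerivAt E (A * E τ) τ := fun τ =>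
    hasDerivAt_exp_smul_const' (𝕂 := ℝ) A τ
  have hLcE : ∀ τ : ℝ, HasDerivAt (fun τ => Lc (E τ)) (Lc (A * E τ)) τ := fun τ =>
    @HasFDerivAt.comp_hasDerivAt ℝ _ (Matrix (Fin N₀) (Fin N₀) 𝕂) _ _
      ((Fin N₀ → 𝕂) →L[ℝ] (Fin N₀ → 𝕂)) _ _ E _ τ _ _ (Lc.hasFDerivAt (x := E τ)) (hE' τ)
  -- derivative of G
  set G : ℝ → (Fin N₀ → 𝕂) :=
    fun τ => (∫ s in (-D)..τ, g s) - ∫ s in (-D)..(τ - D), g s with hG_def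
  have hG : HasDerivWithinAt G (g t - g (t - D)) (Set.Ici 0) t := by
    have part1 : HasDerivWithinAt (fun τ => ∫ s in (-D)..τ, g s) (g t) (Set.Ici 0) t :=
      (hG₁ t (by linarith)).mono (Set.Ici_subset_Ici.2 (by linarith))
    have hsub : HasDerivWithinAt (fun τ : ℝ => τ - D) 1 (Set.Ici 0) t :=
      ((hasDerivAt_id t).sub_const D).hasDerivWithinAt
    have hmaps : Set.MapsTo (fun τ : ℝ => τ - D) (Set.Ici 0) (Set.Ici (-D)) := by
      intro x hx
      simp only [Set.mem_Ici] at hx ⊢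
      linarith
    have part2 := (hG₁ (t - D) (by linarith)).scomp t hsub hmaps
    simp only [one_smul] at part2
    exact part1.sub part2
  have hFc : HasDerivWithinAt (fun τ => Lc (E τ) (G τ))
      (Lc (A * E t) (G t) + Lc (E t) (g t - g (t - D))) (Set.Ici 0) t :=
    (hLcE t).hasDerivWithinAt.clm_apply hG
  -- the integral equals Lc (E τ) (G τ) on Ici 0
  have heq : ∀ τ : ℝ, 0 ≤ τ →
      (∫ s in (τ - D)..τ, NormedSpace.exp (((τ - s - D : ℝ) : 𝕂) • A) *ᵥ (B *ᵥ u s))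
        = Lc (E τ) (G τ) := by
    intro τ hτ
    have h1 : ∀ s : ℝ,
        NormedSpace.exp (((τ - s - D : ℝ) : 𝕂) • A) *ᵥ (B *ᵥ u s) = Lc (E τ) (g s) := by
      intro s
      have h2 : (τ - s - D) = τ + (-s - D) := by ring
      rw [hcast, h2, ← hmul τ (-s - D), hLc, hg_def, hE_def]
      simp [Matrix.mulVec_mulVec, Matrix.mul_assoc]
    rw [intervalIntegral.integral_congr (g := fun s => Lc (E τ) (g s)) (fun s _ => h1 s)]
    rw [ContinuousLinearMap.intervalIntegral_comp_comm _
      (hgint (τ - D) τ (by linarith) (by linarith))]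
    rw [hG_def]
    congr 1
    exact (intervalIntegral.integral_interval_sub_left
      (hgint (-D) τ (le_rfl) (by linarith)) (hgint (-D) (τ - D) (le_rfl) (by linarith))).symm
  -- assemble
  have h := (hY t ht).add hFc
  have hval : (A *ᵥ Y t + B *ᵥ u (t - D) + d t)
      + (Lc (A * E t) (G t) + Lc (E t) (g t - g (t - D)))
      = A *ᵥ (Y t
          + ∫ s in (t - D)..t, NormedSpace.exp (((t - s - D : ℝ) : 𝕂) • A) *ᵥ (B *ᵥ u s))
        + NormedSpace.exp ((-(D : 𝕂)) • A) *ᵥ (B *ᵥ u t) + d t := by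
    rw [heq t ht]
    have e1 : Lc (A * E t) (G t) = A *ᵥ (Lc (E t) (G t)) := by
      rw [hLc, hLc, ← Matrix.mulVec_mulVec]
    have e2 : E t *ᵥ g t = NormedSpace.exp ((-(D : 𝕂)) • A) *ᵥ (B *ᵥ u t) := by
      have hDK : (-(D : 𝕂)) = ((-D : ℝ) : 𝕂) := by push_cast; ring
      have h0 : t + (-t - D) = -D := by ring
      rw [hDK, hcast]
      simp only [hg_def, hE_def, Matrix.mulVec_mulVec]
      rw [← Matrix.mul_assoc, hmul, h0]
    have e3 : E t *ᵥ g (t - D) = B *ᵥ u (t - D) := by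
      have h0 : t + (-(t - D) - D) = 0 := by ring
      simp only [hg_def, hE_def, Matrix.mulVec_mulVec]
      rw [← Matrix.mul_assoc, hmul, h0, zero_smul, NormedSpace.exp_zero, Matrix.one_mul]
    simp only [map_sub, hLc, Matrix.mulVec_sub]
    rw [← Matrix.mulVec_mulVec, e2, e3, Matrix.mulVec_add]
    abel
  exact hval ▸ (h.congr (fun τ hτ => by rw [heq τ hτ]; rfl) (by rw [heq t ht]; rfl))
end

section
/- (Conversion Lemma.) For every σ > 0, M ≥ 1, and ε > 0, there exists δ ∈ (0, σ) such that for all continuous functions φ, y : ℝ₊ → ℝ₊ and every constant γ ≥ 0 satisfying φ(t) ≤ M e^{−σ(t−t₀)} φ(t₀) + γ sup_{t₀ ≤ s ≤ t} y(s) for all t ≥ t₀ ≥ 0, it holds that φ(t) ≤ M e^{−δ t} φ(0) + γ(1+ε) sup_{0 ≤ s ≤ t} e^{−δ(t−s)} y(s) for all t ≥ 0. -/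
open Set

set_option maxHeartbeats 1600000 in
/-- the Conversion Lemma (uniform ISS estimate into fading memory estimate). -/
theorem stmt_10 :
    ∀ σ M ε : ℝ, 0 < σ → 1 ≤ M → 0 < ε →
      ∃ δ ∈ Ioo 0 σ,
        ∀ φ y : ℝ → ℝ, Continuous φ → Continuous y →
          (∀ t, 0 ≤ φ t) → (∀ t, 0 ≤ y t) →
          ∀ γ : ℝ, 0 ≤ γ →
          (∀ t₀ ≥ (0 : ℝ), ∀ t ≥ t₀,
            φ t ≤ M * Real.exp (-σ * (t - t₀)) * φ t₀ + γ * sSup (y '' Icc t₀ t)) →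
          ∀ t ≥ (0 : ℝ),
            φ t ≤ M * Real.exp (-δ * t) * φ 0
              + γ * (1 + ε) * sSup ((fun s => Real.exp (-δ * (t - s)) * y s) '' Icc 0 t) := by
  intro σ M ε hσ hM hε
  -- constants
  set c : ℝ := ε / (2 * (1 + ε)) with hc_def
  have hε1 : (0:ℝ) < 1 + ε := by linarith
  have hc0 : 0 < c := by positivity
  have hc1 : c < 1 := by
    rw [hc_def, div_lt_one (by positivity)]; linarith
  have hcε : c * (1 + ε) = ε / 2 := by
    rw [hc_def, div_mul_eq_mul_div, div_eq_div_iff (by positivity) (by positivity)]; ring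
  have hMc1 : 1 < M / c := by
    rw [lt_div_iff₀ hc0]; linarith
  set L : ℝ := Real.log (M / c) / σ with hL_def
  have hL : 0 < L := div_pos (Real.log_pos hMc1) hσ
  have hσL : σ * L = Real.log (M / c) := by
    rw [hL_def, mul_comm, div_mul_cancel₀ _ hσ.ne']
  have hexpσL : M * Real.exp (-(σ * L)) = c := by
    rw [hσL, Real.exp_neg, Real.exp_log (by positivity)]
    field_simp
  have hK1 : 1 < (1 + ε) / (1 + ε / 2) := by
    rw [lt_div_iff₀ (by linarith)]; linarith
  have hc1' : 1 < 1 / c := by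
    rw [lt_div_iff₀ hc0]; linarith
  set δ : ℝ := min (min (Real.log ((1 + ε) / (1 + ε / 2)) / L) (Real.log (1 / c) / L)) (σ / 2)
    with hδ_def
  have hδ0 : 0 < δ := by
    refine lt_min (lt_min ?_ ?_) (by linarith)
    · exact div_pos (Real.log_pos hK1) hL
    · exact div_pos (Real.log_pos hc1') hL
  have hδσ : δ < σ := lt_of_le_of_lt (min_le_right _ _) (by linarith)
  have hδL1 : Real.exp (δ * L) ≤ (1 + ε) / (1 + ε / 2) := by
    have h1 : δ ≤ Real.log ((1 + ε) / (1 + ε / 2)) / L :=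
      le_trans (min_le_left _ _) (min_le_left _ _)
    have h2 : δ * L ≤ Real.log ((1 + ε) / (1 + ε / 2)) := by
      rw [← le_div_iff₀ hL] at *; exact h1
    calc Real.exp (δ * L) ≤ Real.exp (Real.log ((1 + ε) / (1 + ε / 2))) := Real.exp_le_exp.2 h2
      _ = (1 + ε) / (1 + ε / 2) := Real.exp_log (by positivity)
  have hδL2 : c * Real.exp (δ * L) ≤ 1 := by
    have h1 : δ ≤ Real.log (1 / c) / L :=
      le_trans (min_le_left _ _) (min_le_right _ _)
    have h2 : δ * L ≤ Real.log (1 / c) := by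
      rw [← le_div_iff₀ hL] at *; exact h1
    have h3 : Real.exp (δ * L) ≤ 1 / c := by
      calc Real.exp (δ * L) ≤ Real.exp (Real.log (1 / c)) := Real.exp_le_exp.2 h2
        _ = 1 / c := Real.exp_log (by positivity)
    calc c * Real.exp (δ * L) ≤ c * (1 / c) := by nlinarith
      _ = 1 := by field_simp
  have hE1 : Real.exp (δ * L) * (1 + ε / 2) ≤ 1 + ε := by
    have := mul_le_mul_of_nonneg_right hδL1 (by linarith : (0:ℝ) ≤ 1 + ε / 2)
    calc Real.exp (δ * L) * (1 + ε / 2) ≤ (1 + ε) / (1 + ε / 2) * (1 + ε / 2) := this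
      _ = 1 + ε := by field_simp
  have hEε : Real.exp (δ * L) ≤ 1 + ε := by nlinarith [Real.exp_pos (δ * L)]
  clear_value δ c L
  clear hδ_def hc_def hL_def
  refine ⟨δ, ⟨hδ0, hδσ⟩, ?_⟩
  intro φ y hφc hyc hφ0 hy0 γ hγ H
  -- the fading memory sup
  obtain ⟨V, hVeq⟩ : ∃ V : ℝ → ℝ,
      ∀ t, V t = sSup ((fun s => Real.exp (-δ * (t - s)) * y s) '' Icc 0 t) :=
    ⟨_, fun _ => rfl⟩
  have hVbdd : ∀ t : ℝ, BddAbove ((fun s => Real.exp (-δ * (t - s)) * y s) '' Icc 0 t) := by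
    intro t
    exact (isCompact_Icc.image (by fun_prop)).bddAbove
  have hVnn : ∀ t : ℝ, 0 ≤ V t := by
    intro t
    rw [hVeq]
    apply Real.sSup_nonneg
    rintro x ⟨s, hs, rfl⟩
    exact mul_nonneg (Real.exp_pos _).le (hy0 s)
  have hyV : ∀ t s : ℝ, 0 ≤ s → s ≤ t → y s ≤ Real.exp (δ * (t - s)) * V t := by
    intro t s hs0 hst
    have h1 : Real.exp (-δ * (t - s)) * y s ≤ V t := by
      rw [hVeq]
      exact le_csSup (hVbdd t) ⟨s, ⟨hs0, hst⟩, rfl⟩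
    calc y s = Real.exp (δ * (t - s)) * (Real.exp (-δ * (t - s)) * y s) := by
          rw [← mul_assoc, ← Real.exp_add]; ring_nf; simp
      _ ≤ Real.exp (δ * (t - s)) * V t :=
          mul_le_mul_of_nonneg_left h1 (Real.exp_pos _).le
  -- base case : 0 ≤ t ≤ L
  have base : ∀ t : ℝ, 0 ≤ t → t ≤ L →
      φ t ≤ M * Real.exp (-δ * t) * φ 0 + γ * (1 + ε) * V t := by
    intro t ht0 htL
    have h1 := H 0 le_rfl t ht0
    have h2 : M * Real.exp (-σ * (t - 0)) * φ 0 ≤ M * Real.exp (-δ * t) * φ 0 := by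
      have : Real.exp (-σ * (t - 0)) ≤ Real.exp (-δ * t) := by
        apply Real.exp_le_exp.2; nlinarith
      exact mul_le_mul_of_nonneg_right
        (mul_le_mul_of_nonneg_left this (by linarith)) (hφ0 0)
    have h3 : sSup (y '' Icc 0 t) ≤ (1 + ε) * V t := by
      apply Real.sSup_le
      · rintro x ⟨s, ⟨hs0, hst⟩, rfl⟩
        have h4 : y s ≤ Real.exp (δ * (t - s)) * V t := hyV t s hs0 hst
        have h5 : Real.exp (δ * (t - s)) ≤ Real.exp (δ * L) := by
          apply Real.exp_le_exp.2; nlinarith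
        calc y s ≤ Real.exp (δ * (t - s)) * V t := h4
          _ ≤ Real.exp (δ * L) * V t := mul_le_mul_of_nonneg_right h5 (hVnn t)
          _ ≤ (1 + ε) * V t := mul_le_mul_of_nonneg_right hEε (hVnn t)
      · exact mul_nonneg (by positivity) (hVnn t)
    calc φ t ≤ M * Real.exp (-σ * (t - 0)) * φ 0 + γ * sSup (y '' Icc 0 t) := h1
      _ ≤ M * Real.exp (-δ * t) * φ 0 + γ * ((1 + ε) * V t) :=
          add_le_add h2 (mul_le_mul_of_nonneg_left h3 hγ)
      _ = M * Real.exp (-δ * t) * φ 0 + γ * (1 + ε) * V t := by ring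
  -- main induction
  suffices key : ∀ n : ℕ, ∀ t : ℝ, 0 ≤ t → t ≤ n * L →
      φ t ≤ M * Real.exp (-δ * t) * φ 0 + γ * (1 + ε) * V t by
    intro t ht0
    obtain ⟨n, hn⟩ : ∃ n : ℕ, t ≤ n * L := by
      refine ⟨⌈t / L⌉₊, ?_⟩
      rw [← div_le_iff₀ hL]
      exact Nat.le_ceil _
    rw [← hVeq t]
    exact key n t ht0 hn
  intro n
  induction n with
  | zero =>
      intro t ht0 htn
      have : t = 0 := le_antisymm (by simpa using htn) ht0
      subst this
      exact base 0 le_rfl hL.le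
  | succ n ih =>
      intro t ht0 htn
      by_cases htL : t ≤ L
      · exact base t ht0 htL
      push_neg at htL
      have ht1 : 0 ≤ t - L := by linarith
      have ht2 : t - L ≤ n * L := by
        push_cast at htn ⊢; linarith
      have hIH := ih (t - L) ht1 ht2
      have hstep := H (t - L) ht1 t (by linarith)
      rw [show t - (t - L) = L by ring] at hstep
      have hstep' : φ t ≤ c * φ (t - L) + γ * sSup (y '' Icc (t - L) t) := by
        rw [show -σ * L = -(σ * L) by ring] at hstep
        calc φ t ≤ M * Real.exp (-(σ * L)) * φ (t - L) + γ * sSup (y '' Icc (t - L) t) := hstep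
          _ = c * φ (t - L) + γ * sSup (y '' Icc (t - L) t) := by rw [hexpσL]
      -- shift: V (t - L) ≤ exp (δL) * V t
      have hVshift : V (t - L) ≤ Real.exp (δ * L) * V t := by
        rw [hVeq]
        apply Real.sSup_le
        · rintro x ⟨s, ⟨hs0, hst⟩, rfl⟩
          have h1 : Real.exp (-δ * (t - s)) * y s ≤ V t := by
            rw [hVeq]
            exact le_csSup (hVbdd t) ⟨s, ⟨hs0, by linarith⟩, rfl⟩
          show Real.exp (-δ * (t - L - s)) * y s ≤ Real.exp (δ * L) * V t
          have h2 : Real.exp (-δ * (t - L - s)) * y s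
              = Real.exp (δ * L) * (Real.exp (-δ * (t - s)) * y s) := by
            rw [← mul_assoc, ← Real.exp_add]; ring_nf
          rw [h2]
          exact mul_le_mul_of_nonneg_left h1 (Real.exp_pos _).le
        · exact mul_nonneg (Real.exp_pos _).le (hVnn t)
      -- last window: sSup (y '' Icc (t-L) t) ≤ exp (δL) * V t
      have hS : sSup (y '' Icc (t - L) t) ≤ Real.exp (δ * L) * V t := by
        apply Real.sSup_le
        · rintro x ⟨s, ⟨hs0, hst⟩, rfl⟩
          have h4 : y s ≤ Real.exp (δ * (t - s)) * V t := hyV t s (by linarith) hst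
          have h5 : Real.exp (δ * (t - s)) ≤ Real.exp (δ * L) := by
            apply Real.exp_le_exp.2; nlinarith
          calc y s ≤ Real.exp (δ * (t - s)) * V t := h4
            _ ≤ Real.exp (δ * L) * V t := mul_le_mul_of_nonneg_right h5 (hVnn t)
        · exact mul_nonneg (Real.exp_pos _).le (hVnn t)
      have hexpsplit : Real.exp (-δ * (t - L)) = Real.exp (δ * L) * Real.exp (-δ * t) := by
        rw [← Real.exp_add]; ring_nf
      set E : ℝ := Real.exp (δ * L) with hE_def
      have hEpos : 0 < E := Real.exp_pos _
      have hApos : 0 < Real.exp (-δ * t) := Real.exp_pos _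
      have hφt : φ (t - L) ≤ M * (E * Real.exp (-δ * t)) * φ 0 + γ * (1 + ε) * (E * V t) := by
        calc φ (t - L) ≤ M * Real.exp (-δ * (t - L)) * φ 0 + γ * (1 + ε) * V (t - L) := hIH
          _ ≤ M * (E * Real.exp (-δ * t)) * φ 0 + γ * (1 + ε) * (E * V t) := by
              rw [hexpsplit]
              exact add_le_add le_rfl (mul_le_mul_of_nonneg_left hVshift (by positivity))
      have hfin : c * (M * (E * Real.exp (-δ * t)) * φ 0 + γ * (1 + ε) * (E * V t))
          + γ * (E * V t) ≤ M * Real.exp (-δ * t) * φ 0 + γ * (1 + ε) * V t := by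
        have hP1 : 0 ≤ M * Real.exp (-δ * t) * φ 0 := by
          have := hφ0 0; positivity
        have hP2 : 0 ≤ γ * V t := mul_nonneg hγ (hVnn t)
        have hcE : c * E ≤ 1 := hδL2
        have hE3 : E * (1 + c * (1 + ε)) ≤ 1 + ε := by rw [hcε]; exact hE1
        nlinarith [mul_le_mul_of_nonneg_right hcE hP1, mul_le_mul_of_nonneg_right hE3 hP2]
      calc φ t ≤ c * φ (t - L) + γ * sSup (y '' Icc (t - L) t) := hstep'
        _ ≤ c * (M * (E * Real.exp (-δ * t)) * φ 0 + γ * (1 + ε) * (E * V t))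
            + γ * (E * V t) := by
            exact add_le_add (mul_le_mul_of_nonneg_left hφt hc0.le)
              (mul_le_mul_of_nonneg_left hS hγ)
        _ ≤ M * Real.exp (-δ * t) * φ 0 + γ * (1 + ε) * V t := hfin
end
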